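/- Let (X, r) be a non-degenerate set-theoretic solution of the Yang–Baxter equation with r(x,y) = (σ_x(y), τ_y(x)), and let T : X × X → X × X be defined by T(x,y) = (τ_y(x), y). Then T is bijective with inverse T⁻¹(x,y) = (τ_y⁻¹(x), y), and T ∘ r ∘ T⁻¹(x,y) = (x ▷ y, x), where x ▷ y := τ_x(σ_{τ_y⁻¹(x)}(y)). -/
import Mathlib


def rFst {X : Type*} (r : X × X → X × X) : X × X × X → X × X × X :=
  fun p => ((r (p.1, p.2.1)).1, (r (p.1, p.2.1)).2, p.2.2)

def rSnd {X : Type*} (r : X × X → X × X) : X × X × X → X × X × X :=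
  fun p => (p.1, r (p.2.1, p.2.2))

def IsYB {X : Type*} (r : X × X → X × X) : Prop :=
  rFst r ∘ rSnd r ∘ rFst r = rSnd r ∘ rFst r ∘ rSnd r

/-- A rack structure: each left translation is bijective and the operation
is left self-distributive. -/
def IsRack {X : Type*} (op : X → X → X) : Prop :=
  (∀ x : X, Function.Bijective (op x)) ∧
    ∀ x y z : X, op x (op y z) = op (op x y) (op x z)

theorem stmt9 {X : Type*} [Nonempty X] (r : X × X → X × X) (σ τ : X → X → X)
    (hr : ∀ x y : X, r (x, y) = (σ x y, τ y x))
    (hYB : IsYB r) (hrbij : Function.Bijective r)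
    (hσbij : ∀ x : X, Function.Bijective (σ x))
    (hτbij : ∀ y : X, Function.Bijective (τ y)) :
    Function.Bijective (fun p : X × X => (τ p.2 p.1, p.2)) ∧
    Function.LeftInverse (fun p : X × X => (Function.invFun (τ p.2) p.1, p.2))
      (fun p : X × X => (τ p.2 p.1, p.2)) ∧
    Function.RightInverse (fun p : X × X => (Function.invFun (τ p.2) p.1, p.2))
      (fun p : X × X => (τ p.2 p.1, p.2)) ∧
    ∀ x y : X,
      ((fun p : X × X => (τ p.2 p.1, p.2)) ∘ r ∘
        (fun p : X × X => (Function.invFun (τ p.2) p.1, p.2))) (x, y)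
        = (τ x (σ (Function.invFun (τ y) x) y), x) := by
  have hli : Function.LeftInverse (fun p : X × X => (Function.invFun (τ p.2) p.1, p.2))
      (fun p : X × X => (τ p.2 p.1, p.2)) := by
    intro p
    simp [Function.leftInverse_invFun (hτbij p.2).1 p.1]
  have hri : Function.RightInverse (fun p : X × X => (Function.invFun (τ p.2) p.1, p.2))
      (fun p : X × X => (τ p.2 p.1, p.2)) := by
    intro p
    simp [Function.rightInverse_invFun (hτbij p.2).2 p.1]
  refine ⟨⟨hli.injective, hri.surjective⟩, hli, hri, ?_⟩
  intro x y
  simp [hr, Function.rightInverse_invFun (hτbij y).2 x]
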